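/- Let P be a two-color grid poset with the max property and let L := J_color(P). Suppose L is M-structured for M = [[2,0],[0,2]]. Write (a,b) := wt(max). Let W be the subgroup of GL₂(ℤ) generated by S_α := [[−1,0],[0,1]] and S_β := [[1,0],[0,−1]] (a finite group of order 4). Then in the group ring ℤ[ℤ²]: (Σ_{s∈L} e^{wt(s)}) · (Σ_{w∈W} det(w) e^{w·(1,1)}) = Σ_{w∈W} det(w) e^{w·(a+1,b+1)}. -/

import Mathlib

open scoped Classical

structure GridData (P : Type) [PartialOrder P] where
  m : ℕ
  chain : P → ℕ
  color : P → Fin 2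

def IsIdeal {P : Type} [PartialOrder P] (t : Finset P) : Prop :=
  ∀ ⦃x⦄, x ∈ t → ∀ ⦃y⦄, y ≤ x → y ∈ t

namespace GridData

variable {P : Type} [PartialOrder P] [Fintype P]

/-- The defining properties of a grid poset. -/
def IsGridPoset (G : GridData P) : Prop :=
  1 ≤ G.m ∧
  (∀ u : P, G.chain u ∈ Finset.Icc 1 G.m) ∧
  (∀ i ∈ Finset.Icc 1 G.m, ∃ u : P, G.chain u = i) ∧
  (∀ u v : P, G.chain u = G.chain v → u ≤ v ∨ v ≤ u) ∧
  (∀ u v : P, u ⋖ v → G.chain u = G.chain v ∨ G.chain u = G.chain v + 1)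

/-- The defining properties of a two-color grid poset. -/
def IsTwoColorGridPoset (G : GridData P) : Prop :=
  G.IsGridPoset ∧
  (∀ u v : P, G.chain u = G.chain v → G.color u = G.color v) ∧
  (∀ u v : P, Relation.ReflTransGen (fun x y : P => x ⋖ y ∨ y ⋖ x) u v →
    G.chain u = G.chain v + 1 → G.color u ≠ G.color v)

/-- The max property. -/
def MaxProperty (G : GridData P) : Prop :=
  (∀ u : P, IsMax u → G.chain u ≤ 2) ∧
  (∀ u v : P, IsMax u → IsMax v → u ≠ v → G.color u ≠ G.color v)

/-- The fiber `C i` of the chain function. -/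
def fiber (G : GridData P) (i : ℕ) : Finset P :=
  Finset.univ.filter (fun u => G.chain u = i)

/-- One step in a `γ`-component of `J_color(P)`: add or remove a single vertex of
color `γ` while both sets are order ideals. -/
def GStep (G : GridData P) (γ : Fin 2) (s t : Finset P) : Prop :=
  IsIdeal s ∧ IsIdeal t ∧ ∃ u : P, G.color u = γ ∧
    ((u ∉ s ∧ t = insert u s) ∨ (u ∉ t ∧ s = insert u t))

/-- The `γ`-component of `t` in `J_color(P)`. -/
def comp (G : GridData P) (γ : Fin 2) (t : Finset P) : Set (Finset P) :=
  {s | Relation.ReflTransGen (G.GStep γ) t s}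

noncomputable def minCard (G : GridData P) (γ : Fin 2) (t : Finset P) : ℕ :=
  sInf (Finset.card '' G.comp γ t)

noncomputable def maxCard (G : GridData P) (γ : Fin 2) (t : Finset P) : ℕ :=
  sSup (Finset.card '' G.comp γ t)

/-- `m_γ(t) = 2 ρ_γ(t) - l_γ(t)`. -/
noncomputable def mcoord (G : GridData P) (γ : Fin 2) (t : Finset P) : ℤ :=
  2 * ((t.card : ℤ) - (G.minCard γ t : ℤ)) - ((G.maxCard γ t : ℤ) - (G.minCard γ t : ℤ))

/-- The weight of an element of `J_color(P)` (color `0` is α, color `1` is β). -/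
noncomputable def wt (G : GridData P) (t : Finset P) : Fin 2 → ℤ :=
  ![G.mcoord 0 t, G.mcoord 1 t]

/-- `J_color(P)` is `M`-structured. -/
def MStructured (G : GridData P) (M : Matrix (Fin 2) (Fin 2) ℤ) : Prop :=
  ∀ s t : Finset P, IsIdeal s → IsIdeal t → ∀ u : P, u ∉ s → t = insert u s →
    G.wt s + M (G.color u) = G.wt t

end GridData


set_option linter.unusedSectionVars false
set_option maxHeartbeats 1000000

namespace GridData

variable {P : Type} [PartialOrder P] [Fintype P]

-- new definitions
def Kc (G : GridData P) (γ : Fin 2) : Finset P :=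
  Finset.univ.filter (fun u => G.color u = γ)

noncomputable def Dset (G : GridData P) (δ : Fin 2) (t : Finset P) : Finset P :=
  Finset.univ.filter (fun y => ∃ x ∈ t, G.color x = δ ∧ y ≤ x)

noncomputable def Uset (G : GridData P) (δ γ : Fin 2) (t : Finset P) : Finset P :=
  Finset.univ.filter (fun x => (G.color x = δ ∧ x ∈ t) ∨
    (G.color x = γ ∧ ∀ y, y ≤ x → G.color y = δ → y ∈ t))

lemma fin2_resolve {γ δ c : Fin 2} (h : δ ≠ γ) (hc : c ≠ δ) : c = γ := by
  revert h hc; revert γ δ c; decide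

lemma gstep_symm {G : GridData P} {γ : Fin 2} {s t : Finset P} (h : G.GStep γ s t) :
    G.GStep γ t s := by
  obtain ⟨h1, h2, u, hu, hc⟩ := h
  exact ⟨h2, h1, u, hu, hc.symm⟩

lemma reach_symm {G : GridData P} {γ : Fin 2} {s t : Finset P}
    (h : Relation.ReflTransGen (G.GStep γ) s t) :
    Relation.ReflTransGen (G.GStep γ) t s := by
  induction h with
  | refl => exact .refl
  | tail _ hbc ih => exact Relation.ReflTransGen.head (gstep_symm hbc) ih

lemma comp_props {G : GridData P} {γ δ : Fin 2} (hδ : δ ≠ γ) {t : Finset P}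
    (ht : IsIdeal t) {s : Finset P} (hs : s ∈ G.comp γ t) :
    IsIdeal s ∧ s ∩ G.Kc δ = t ∩ G.Kc δ := by
  induction hs with
  | refl => exact ⟨ht, rfl⟩
  | tail _ hbc ih =>
    obtain ⟨hb, hc, u, hu, hor⟩ := hbc
    refine ⟨hc, ?_⟩
    rw [← ih.2]
    have hucolor : u ∉ G.Kc δ := by
      simp only [Kc, Finset.mem_filter]
      rintro ⟨-, h⟩; rw [h] at hu; exact hδ hu
    rcases hor with ⟨hus, rfl⟩ | ⟨hut, rfl⟩
    · ext x
      simp only [Finset.mem_inter, Finset.mem_insert]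
      constructor
      · rintro ⟨hx | hx, hk⟩
        · exact absurd (hx ▸ hk) hucolor
        · exact ⟨hx, hk⟩
      · rintro ⟨hx, hk⟩; exact ⟨Or.inr hx, hk⟩
    · ext x
      simp only [Finset.mem_inter, Finset.mem_insert]
      constructor
      · rintro ⟨hx, hk⟩; exact ⟨Or.inr hx, hk⟩
      · rintro ⟨hx | hx, hk⟩
        · exact absurd (hx ▸ hk) hucolor
        · exact ⟨hx, hk⟩

/-- If `s ⊆ c` are ideals and everything in `c \ s` has color `γ`, then `s` is
reachable from `c` by `γ`-steps. -/
lemma reach_down (G : GridData P) (γ : Fin 2) :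
    ∀ n (c s : Finset P), (c \ s).card = n → s ⊆ c → IsIdeal s → IsIdeal c →
    (∀ x ∈ c, x ∉ s → G.color x = γ) →
    Relation.ReflTransGen (G.GStep γ) c s := by
  intro n
  induction n with
  | zero =>
    intro c s hcard hsub _ _ _
    have : c = s := by
      have h1 : c \ s = ∅ := Finset.card_eq_zero.mp hcard
      have h2 : c ⊆ s := by
        intro x hx
        by_contra hxs
        have : x ∈ c \ s := Finset.mem_sdiff.mpr ⟨hx, hxs⟩
        simp [h1] at this
      exact Finset.Subset.antisymm h2 hsub
    rw [this]
  | succ n ih =>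
    intro c s hcard hsub hs hc hcol
    have hne : (c \ s).Nonempty := by
      rw [← Finset.card_pos, hcard]; omega
    obtain ⟨x, hxmem, hxmax⟩ : ∃ x ∈ c \ s, ∀ y ∈ c \ s, ¬ x < y := by
      obtain ⟨x, hx⟩ := Finset.exists_maximal hne
      exact ⟨x, hx.1, fun y hy hlt => lt_irrefl x (lt_of_lt_of_le hlt (hx.2 hy hlt.le))⟩
    obtain ⟨hxc, hxs⟩ := Finset.mem_sdiff.mp hxmem
    have hcx : IsIdeal (c.erase x) := by
      intro z hz y hy
      obtain ⟨hzx, hzc⟩ := Finset.mem_erase.mp hz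
      refine Finset.mem_erase.mpr ⟨?_, hc hzc hy⟩
      rintro rfl
      -- y = x ≤ z, z ≠ x, z ∈ c; then z ∈ c \ s and x < z, contradiction
      have hzs : z ∉ s := fun hzs => hxs (hs hzs hy)
      exact hxmax z (Finset.mem_sdiff.mpr ⟨hzc, hzs⟩) (lt_of_le_of_ne hy (Ne.symm hzx))
    have hstep : G.GStep γ c (c.erase x) := by
      refine ⟨hc, hcx, x, hcol x hxc hxs, Or.inr ⟨Finset.notMem_erase x c, ?_⟩⟩
      exact (Finset.insert_erase hxc).symm
    refine Relation.ReflTransGen.head hstep (ih (c.erase x) s ?_ ?_ hs hcx ?_)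
    · have : c.erase x \ s = (c \ s).erase x := by
        ext z; simp only [Finset.mem_sdiff, Finset.mem_erase]; tauto
      rw [this, Finset.card_erase_of_mem hxmem, hcard]
      omega
    · intro z hz
      refine Finset.mem_erase.mpr ⟨?_, hsub hz⟩
      rintro rfl; exact hxs hz
    · intro z hz hzs
      exact hcol z (Finset.mem_of_mem_erase hz) hzs


section Formulas

variable {G : GridData P} {γ δ : Fin 2} {t : Finset P}

lemma Dset_ideal : IsIdeal (G.Dset δ t) := by
  intro x hx y hy
  simp only [Dset, Finset.mem_filter, Finset.mem_univ, true_and] at hx ⊢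
  obtain ⟨z, hz, hc, hxz⟩ := hx
  exact ⟨z, hz, hc, le_trans hy hxz⟩

lemma Dset_subset {s : Finset P} (hs : IsIdeal s) (hpart : s ∩ G.Kc δ = t ∩ G.Kc δ) :
    G.Dset δ t ⊆ s := by
  intro y hy
  simp only [Dset, Finset.mem_filter, Finset.mem_univ, true_and] at hy
  obtain ⟨x, hx, hc, hyx⟩ := hy
  have hxs : x ∈ s := by
    have : x ∈ t ∩ G.Kc δ := Finset.mem_inter.mpr ⟨hx, by simp [Kc, hc]⟩
    rw [← hpart] at this
    exact (Finset.mem_inter.mp this).1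
  exact hs hxs hyx

lemma Dset_subset_self (ht : IsIdeal t) : G.Dset δ t ⊆ t := Dset_subset ht rfl

lemma Dset_part (ht : IsIdeal t) : G.Dset δ t ∩ G.Kc δ = t ∩ G.Kc δ := by
  apply Finset.Subset.antisymm
  · intro x hx
    obtain ⟨h1, h2⟩ := Finset.mem_inter.mp hx
    exact Finset.mem_inter.mpr ⟨Dset_subset_self ht h1, h2⟩
  · intro x hx
    obtain ⟨h1, h2⟩ := Finset.mem_inter.mp hx
    refine Finset.mem_inter.mpr ⟨?_, h2⟩
    simp only [Dset, Finset.mem_filter, Finset.mem_univ, true_and]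
    simp only [Kc, Finset.mem_filter] at h2
    exact ⟨x, h1, h2.2, le_refl x⟩

lemma Dset_mem_comp (hδ : δ ≠ γ) (ht : IsIdeal t) : G.Dset δ t ∈ G.comp γ t := by
  refine G.reach_down γ _ t (G.Dset δ t) rfl (Dset_subset_self ht) Dset_ideal ht ?_
  intro x hx hxD
  refine fin2_resolve hδ ?_
  intro hcol
  apply hxD
  simp only [Dset, Finset.mem_filter, Finset.mem_univ, true_and]
  exact ⟨x, hx, hcol, le_refl x⟩

lemma Uset_ideal (hδ : δ ≠ γ) (ht : IsIdeal t) : IsIdeal (G.Uset δ γ t) := by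
  intro x hx y hy
  simp only [Uset, Finset.mem_filter, Finset.mem_univ, true_and] at hx ⊢
  rcases hx with ⟨hc, hxt⟩ | ⟨hc, hcond⟩
  · have hyt : y ∈ t := ht hxt hy
    by_cases hcy : G.color y = δ
    · exact Or.inl ⟨hcy, hyt⟩
    · exact Or.inr ⟨fin2_resolve hδ hcy, fun z hz _ => ht hyt hz⟩
  · by_cases hcy : G.color y = δ
    · exact Or.inl ⟨hcy, hcond y hy hcy⟩
    · exact Or.inr ⟨fin2_resolve hδ hcy, fun z hz hzc => hcond z (le_trans hz hy) hzc⟩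

lemma subset_Uset_of (hδ : δ ≠ γ) {s : Finset P} (hs : IsIdeal s)
    (hpart : s ∩ G.Kc δ = t ∩ G.Kc δ) : s ⊆ G.Uset δ γ t := by
  intro x hx
  simp only [Uset, Finset.mem_filter, Finset.mem_univ, true_and]
  by_cases hcx : G.color x = δ
  · refine Or.inl ⟨hcx, ?_⟩
    have : x ∈ s ∩ G.Kc δ := Finset.mem_inter.mpr ⟨hx, by simp [Kc, hcx]⟩
    rw [hpart] at this
    exact (Finset.mem_inter.mp this).1
  · refine Or.inr ⟨fin2_resolve hδ hcx, fun y hy hyc => ?_⟩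
    have : y ∈ s ∩ G.Kc δ := Finset.mem_inter.mpr ⟨hs hx hy, by simp [Kc, hyc]⟩
    rw [hpart] at this
    exact (Finset.mem_inter.mp this).1

lemma subset_Uset (hδ : δ ≠ γ) (ht : IsIdeal t) : t ⊆ G.Uset δ γ t :=
  subset_Uset_of hδ ht rfl

lemma Uset_part (hδ : δ ≠ γ) (ht : IsIdeal t) : G.Uset δ γ t ∩ G.Kc δ = t ∩ G.Kc δ := by
  apply Finset.Subset.antisymm
  · intro x hx
    obtain ⟨h1, h2⟩ := Finset.mem_inter.mp hx
    simp only [Kc, Finset.mem_filter] at h2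
    simp only [Uset, Finset.mem_filter, Finset.mem_univ, true_and] at h1
    rcases h1 with ⟨_, hxt⟩ | ⟨hc, _⟩
    · exact Finset.mem_inter.mpr ⟨hxt, by simp [Kc, h2.2]⟩
    · exact absurd (hc ▸ h2.2 : γ = δ).symm hδ
  · intro x hx
    obtain ⟨h1, h2⟩ := Finset.mem_inter.mp hx
    exact Finset.mem_inter.mpr ⟨subset_Uset hδ ht h1, h2⟩

lemma Uset_mem_comp (hδ : δ ≠ γ) (ht : IsIdeal t) : G.Uset δ γ t ∈ G.comp γ t := by
  refine reach_symm (G.reach_down γ _ (G.Uset δ γ t) t rfl (subset_Uset hδ ht)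
    ht (Uset_ideal hδ ht) ?_)
  intro x hx hxt
  simp only [Uset, Finset.mem_filter, Finset.mem_univ, true_and] at hx
  rcases hx with ⟨_, hmem⟩ | ⟨hc, _⟩
  · exact absurd hmem hxt
  · exact hc

lemma minCard_eq (hδ : δ ≠ γ) (ht : IsIdeal t) : G.minCard γ t = (G.Dset δ t).card := by
  apply Nat.le_antisymm
  · exact Nat.sInf_le ⟨_, Dset_mem_comp hδ ht, rfl⟩
  · refine le_csInf ⟨t.card, t, Relation.ReflTransGen.refl, rfl⟩ ?_
    rintro n ⟨s, hs, rfl⟩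
    obtain ⟨hside, hpart⟩ := comp_props hδ ht hs
    exact Finset.card_le_card (Dset_subset hside hpart)

lemma maxCard_eq (hδ : δ ≠ γ) (ht : IsIdeal t) : G.maxCard γ t = (G.Uset δ γ t).card := by
  apply le_antisymm
  · refine csSup_le ⟨t.card, t, Relation.ReflTransGen.refl, rfl⟩ ?_
    rintro n ⟨s, hs, rfl⟩
    obtain ⟨hside, hpart⟩ := comp_props hδ ht hs
    exact Finset.card_le_card (subset_Uset_of hδ hside hpart)
  · refine le_csSup ⟨(Finset.univ : Finset P).card, ?_⟩ ⟨_, Uset_mem_comp hδ ht, rfl⟩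
    rintro n ⟨s, hs, rfl⟩
    exact Finset.card_le_card (Finset.subset_univ s)

lemma mcoord_eq (hδ : δ ≠ γ) (ht : IsIdeal t) :
    G.mcoord γ t = 2 * (t.card : ℤ) - ((G.Dset δ t).card : ℤ) - ((G.Uset δ γ t).card : ℤ) := by
  rw [mcoord, minCard_eq hδ ht, maxCard_eq hδ ht]
  ring

end Formulas

section Structure

variable {G : GridData P}

lemma wt_apply (G : GridData P) (t : Finset P) (γ : Fin 2) : G.wt t γ = G.mcoord γ t := by
  fin_cases γ <;> simp [wt]

lemma Uset_mono {δ γ : Fin 2} {s t : Finset P} (hst : s ⊆ t) :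
    G.Uset δ γ s ⊆ G.Uset δ γ t := by
  intro x hx
  simp only [Uset, Finset.mem_filter, Finset.mem_univ, true_and] at hx ⊢
  rcases hx with ⟨hc, hxs⟩ | ⟨hc, hcond⟩
  · exact Or.inl ⟨hc, hst hxs⟩
  · exact Or.inr ⟨hc, fun y hy hyc => hst (hcond y hy hyc)⟩

lemma matrix_entry_ne {c d : Fin 2} (h : c ≠ d) : (!![2, 0; 0, 2] : Matrix (Fin 2) (Fin 2) ℤ) c d = 0 := by
  fin_cases c <;> fin_cases d <;> simp_all

lemma chain_eq_of_covby (hG : G.IsTwoColorGridPoset) (hM : G.MStructured !![2, 0; 0, 2])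
    {u v : P} (huv : u ⋖ v) : G.chain u = G.chain v := by
  by_contra hne
  have hchain : G.chain u = G.chain v + 1 :=
    (hG.1.2.2.2.2 u v huv).resolve_left hne
  have hcol : G.color u ≠ G.color v :=
    hG.2.2 u v (Relation.ReflTransGen.single (Or.inl huv)) hchain
  have hδγ : G.color v ≠ G.color u := fun h => hcol h.symm
  classical
  let s : Finset P := Finset.univ.filter (fun x => x < v)
  let t : Finset P := Finset.univ.filter (fun x => x ≤ v)
  have hmem_s : ∀ x : P, x ∈ s ↔ x < v := by intro x; simp [s]
  have hmem_t : ∀ x : P, x ∈ t ↔ x ≤ v := by intro x; simp [t]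
  have hs : IsIdeal s := by
    intro x hx y hy
    rw [hmem_s] at hx ⊢
    exact lt_of_le_of_lt hy hx
  have ht : IsIdeal t := by
    intro x hx y hy
    rw [hmem_t] at hx ⊢
    exact le_trans hy hx
  have hvs : v ∉ s := by rw [hmem_s]; exact lt_irrefl v
  have hts : t = insert v s := by
    ext x
    rw [hmem_t, Finset.mem_insert, hmem_s, le_iff_lt_or_eq]
    tauto
  have hMst := hM s t hs ht v hvs hts
  have heq : G.mcoord (G.color u) s = G.mcoord (G.color u) t := by
    have h2 := congrFun hMst (G.color u)
    simp only [Pi.add_apply] at h2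
    rw [wt_apply, wt_apply, matrix_entry_ne hδγ] at h2
    linarith
  have hus : u ∈ s := by rw [hmem_s]; exact huv.1
  have hvt : v ∈ t := by rw [hmem_t]
  -- cardinalities
  have hDt : G.Dset (G.color v) t = t := by
    apply Finset.Subset.antisymm (Dset_subset_self ht)
    intro x hx
    simp only [Dset, Finset.mem_filter, Finset.mem_univ, true_and]
    exact ⟨v, hvt, rfl, (hmem_t x).mp hx⟩
  have hcardt : t.card = s.card + 1 := by
    rw [hts, Finset.card_insert_of_notMem hvs]
  have hvU : v ∈ G.Uset (G.color v) (G.color u) t := subset_Uset hδγ ht hvt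
  have hvUs : v ∉ G.Uset (G.color v) (G.color u) s := by
    intro h
    rw [Uset, Finset.mem_filter] at h
    rcases h.2 with ⟨-, hmem⟩ | ⟨h2, -⟩
    · exact hvs hmem
    · exact hδγ h2
  have hUlt : (G.Uset (G.color v) (G.color u) s).card
      < (G.Uset (G.color v) (G.color u) t).card := by
    apply Finset.card_lt_card
    rw [Finset.ssubset_iff_of_subset (Uset_mono (hts ▸ Finset.subset_insert v s))]
    exact ⟨v, hvU, hvUs⟩
  have hDs_le : (G.Dset (G.color v) s).card ≤ s.card := Finset.card_le_card (Dset_subset_self hs)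
  have hm1 := mcoord_eq hδγ hs (G := G) (t := s)
  have hm2 := mcoord_eq hδγ ht (G := G) (t := t)
  rw [heq, hm2, hDt, hcardt] at hm1
  have hDs_eq : (G.Dset (G.color v) s).card = s.card := by omega
  have hDs : G.Dset (G.color v) s = s :=
    Finset.eq_of_subset_of_card_le (Dset_subset_self hs) (le_of_eq hDs_eq.symm)
  have huD : u ∈ G.Dset (G.color v) s := by rw [hDs]; exact hus
  simp only [Dset, Finset.mem_filter, Finset.mem_univ, true_and] at huD
  obtain ⟨x, hxs, hxc, hux⟩ := huD
  have hxv : x < v := (hmem_s x).mp hxs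
  have hux' : u < x := by
    rcases lt_or_eq_of_le hux with h | rfl
    · exact h
    · exact absurd hxc hcol
  exact huv.2 hux' hxv

lemma exists_le_isMax (u : P) : ∃ m : P, u ≤ m ∧ IsMax m := by
  obtain ⟨m, hm, hmax⟩ : ∃ m ∈ Finset.univ.filter (fun x => u ≤ x),
      ∀ y ∈ Finset.univ.filter (fun x => u ≤ x), ¬ m < y := by
    obtain ⟨m, hx⟩ := Finset.exists_maximal (s := Finset.univ.filter (fun x => u ≤ x))
      ⟨u, by simp⟩
    exact ⟨m, hx.1, fun y hy hlt => lt_irrefl m (lt_of_lt_of_le hlt (hx.2 hy hlt.le))⟩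
  simp only [Finset.mem_filter, Finset.mem_univ, true_and] at hm
  refine ⟨m, hm, fun b hb => ?_⟩
  by_contra hble
  exact hmax b (by simp [le_trans hm hb]) (lt_of_le_of_ne hb (fun h => hble (h ▸ le_refl m)))

lemma chain_eq_of_le (hG : G.IsTwoColorGridPoset) (hM : G.MStructured !![2, 0; 0, 2]) :
    ∀ (n : ℕ) (u v : P), (Finset.univ.filter (fun z => u < z ∧ z ≤ v)).card ≤ n →
      u ≤ v → G.chain u = G.chain v := by
  intro n
  induction n with
  | zero =>
    intro u v hcard huv
    rcases eq_or_lt_of_le huv with rfl | hlt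
    · rfl
    · exfalso
      have hv : v ∈ Finset.univ.filter (fun z => u < z ∧ z ≤ v) := by simp [hlt]
      have := Finset.card_pos.mpr ⟨v, hv⟩
      omega
  | succ n ih =>
    intro u v hcard huv
    rcases eq_or_lt_of_le huv with rfl | hlt
    · rfl
    · obtain ⟨x, hx, hxmin⟩ : ∃ x ∈ Finset.univ.filter (fun z => u < z ∧ z ≤ v),
          ∀ y ∈ Finset.univ.filter (fun z => u < z ∧ z ≤ v), ¬ y < x := by
        obtain ⟨x, hx⟩ := Finset.exists_minimal
          (s := Finset.univ.filter (fun z => u < z ∧ z ≤ v)) ⟨v, by simp [hlt]⟩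
        exact ⟨x, hx.1, fun y hy hlt => lt_irrefl y (lt_of_lt_of_le hlt (hx.2 hy hlt.le))⟩
      simp only [Finset.mem_filter, Finset.mem_univ, true_and] at hx
      obtain ⟨hux, hxv⟩ := hx
      have hcov : u ⋖ x := by
        refine ⟨hux, fun z hz hzx => ?_⟩
        exact hxmin z (by simp [hz, le_trans (le_of_lt hzx) hxv]) hzx
      have h1 : G.chain u = G.chain x := chain_eq_of_covby hG hM hcov
      have hsub : Finset.univ.filter (fun z => x < z ∧ z ≤ v)
          ⊆ Finset.univ.filter (fun z => u < z ∧ z ≤ v) := by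
        intro z hz
        simp only [Finset.mem_filter, Finset.mem_univ, true_and] at hz ⊢
        exact ⟨lt_trans hux hz.1, hz.2⟩
      have hlt' : (Finset.univ.filter (fun z => x < z ∧ z ≤ v)).card
          < (Finset.univ.filter (fun z => u < z ∧ z ≤ v)).card := by
        apply Finset.card_lt_card
        rw [Finset.ssubset_iff_of_subset hsub]
        exact ⟨x, by simp [hux, hxv], by simp⟩
      rw [h1]
      exact ih x v (by omega) hxv

lemma color_eq_of_le (hG : G.IsTwoColorGridPoset) (hM : G.MStructured !![2, 0; 0, 2])
    {u v : P} (huv : u ≤ v) : G.color u = G.color v :=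
  hG.2.1 u v (chain_eq_of_le hG hM _ u v (le_refl _) huv)

lemma comparable_of_color_eq (hG : G.IsTwoColorGridPoset) (hM : G.MStructured !![2, 0; 0, 2])
    (hmax : G.MaxProperty) {u v : P} (hc : G.color u = G.color v) : u ≤ v ∨ v ≤ u := by
  by_cases hch : G.chain u = G.chain v
  · exact hG.1.2.2.2.1 u v hch
  · exfalso
    obtain ⟨mu, humu, hmu⟩ := exists_le_isMax u
    obtain ⟨mv, hvmv, hmv⟩ := exists_le_isMax v
    have h1 : G.chain mu = G.chain u := (chain_eq_of_le hG hM _ u mu (le_refl _) humu).symm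
    have h2 : G.chain mv = G.chain v := (chain_eq_of_le hG hM _ v mv (le_refl _) hvmv).symm
    have hne : mu ≠ mv := by
      rintro rfl
      exact hch (h1.symm.trans h2)
    apply hmax.2 mu mv hmu hmv hne
    rw [← color_eq_of_le hG hM humu, ← color_eq_of_le hG hM hvmv, hc]

end Structure

section Simple

variable {G : GridData P}

lemma fin2_cases_or (c : Fin 2) : c = 0 ∨ c = 1 := by omega

lemma Dset_simple (hG : G.IsTwoColorGridPoset) (hM : G.MStructured !![2, 0; 0, 2])
    {δ : Fin 2} {t : Finset P} (ht : IsIdeal t) :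
    G.Dset δ t = t.filter (fun x => G.color x = δ) := by
  ext y
  simp only [Dset, Finset.mem_filter, Finset.mem_univ, true_and]
  constructor
  · rintro ⟨x, hxt, hxc, hyx⟩
    exact ⟨ht hxt hyx, (color_eq_of_le hG hM hyx).trans hxc⟩
  · rintro ⟨hyt, hyc⟩
    exact ⟨y, hyt, hyc, le_refl y⟩

lemma Uset_simple (hG : G.IsTwoColorGridPoset) (hM : G.MStructured !![2, 0; 0, 2])
    {δ γ : Fin 2} (hδ : δ ≠ γ) {t : Finset P} (ht : IsIdeal t) :
    G.Uset δ γ t = t.filter (fun x => G.color x = δ) ∪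
      Finset.univ.filter (fun x => G.color x = γ) := by
  ext x
  simp only [Uset, Finset.mem_filter, Finset.mem_univ, true_and, Finset.mem_union]
  constructor
  · rintro (⟨hc, hxt⟩ | ⟨hc, -⟩)
    · exact Or.inl ⟨hxt, hc⟩
    · exact Or.inr hc
  · rintro (⟨hxt, hc⟩ | hc)
    · exact Or.inl ⟨hc, hxt⟩
    · refine Or.inr ⟨hc, fun y hy hyc => ?_⟩
      exact absurd ((hyc.symm.trans (color_eq_of_le hG hM hy)).trans hc) hδ

lemma mcoord_simple (hG : G.IsTwoColorGridPoset) (hM : G.MStructured !![2, 0; 0, 2])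
    (γ : Fin 2) {t : Finset P} (ht : IsIdeal t) :
    G.mcoord γ t = 2 * ((t.filter (fun x => G.color x = γ)).card : ℤ)
      - ((Finset.univ.filter (fun x => G.color x = γ)).card : ℤ) := by
  have hδ : (1 - γ : Fin 2) ≠ γ := by omega
  rw [mcoord_eq hδ ht, Dset_simple hG hM ht, Uset_simple hG hM hδ ht]
  have hdisj : Disjoint (t.filter (fun x => G.color x = 1 - γ))
      (Finset.univ.filter (fun x => G.color x = γ)) := by
    rw [Finset.disjoint_left]
    intro x hx1 hx2
    simp only [Finset.mem_filter] at hx1 hx2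
    exact hδ (hx1.2 ▸ hx2.2 ▸ rfl : (1 - γ : Fin 2) = γ)
  rw [Finset.card_union_of_disjoint hdisj]
  have hsplit : (t.filter (fun x => G.color x = 1 - γ)).card
      + (t.filter (fun x => G.color x = γ)).card = t.card := by
    have : t.filter (fun x => G.color x = γ) = t.filter (fun x => ¬(G.color x = 1 - γ)) := by
      ext x
      simp only [Finset.mem_filter]
      constructor
      · rintro ⟨hx, hc⟩; exact ⟨hx, fun h => hδ (h ▸ hc)⟩
      · rintro ⟨hx, hc⟩; exact ⟨hx, fin2_resolve hδ hc⟩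
    rw [this, Finset.card_filter_add_card_filter_not]
  push_cast
  omega

lemma wt_simple (hG : G.IsTwoColorGridPoset) (hM : G.MStructured !![2, 0; 0, 2])
    {t : Finset P} (ht : IsIdeal t) :
    G.wt t = ![2 * ((t.filter (fun x => G.color x = 0)).card : ℤ)
        - ((Finset.univ.filter (fun x => G.color x = 0)).card : ℤ),
      2 * ((t.filter (fun x => G.color x = 1)).card : ℤ)
        - ((Finset.univ.filter (fun x => G.color x = 1)).card : ℤ)] := by
  funext γ
  rw [wt_apply]
  fin_cases γ
  · simpa using mcoord_simple hG hM 0 ht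
  · simpa using mcoord_simple hG hM 1 ht

end Simple

section Counting

variable {G : GridData P}

/-- In a finite chain, there is a downward-closed subset of every size. -/
lemma chain_downset_exists (K : Finset P) (hK : ∀ x ∈ K, ∀ y ∈ K, x ≤ y ∨ y ≤ x) :
    ∀ j, j ≤ K.card → ∃ S, S ⊆ K ∧ S.card = j ∧ ∀ x ∈ S, ∀ y ∈ K, y ≤ x → y ∈ S := by
  intro j
  induction j with
  | zero => exact fun _ => ⟨∅, Finset.empty_subset K, rfl, by simp⟩
  | succ j ih =>
    intro hj
    obtain ⟨S, hSK, hScard, hSdc⟩ := ih (by omega)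
    have hne : (K \ S).Nonempty := by
      rw [← Finset.card_pos, Finset.card_sdiff_of_subset hSK]
      omega
    obtain ⟨x, hxmem, hxmin⟩ : ∃ x ∈ K \ S, ∀ y ∈ K \ S, ¬ y < x := by
      obtain ⟨x, hx⟩ := Finset.exists_minimal hne
      exact ⟨x, hx.1, fun y hy hlt => lt_irrefl y (lt_of_lt_of_le hlt (hx.2 hy hlt.le))⟩
    obtain ⟨hxK, hxS⟩ := Finset.mem_sdiff.mp hxmem
    refine ⟨insert x S, Finset.insert_subset hxK hSK, ?_, ?_⟩
    · rw [Finset.card_insert_of_notMem hxS, hScard]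
    · intro z hz y hy hyz
      rcases Finset.mem_insert.mp hz with rfl | hzS
      · by_cases hyS : y ∈ S
        · exact Finset.mem_insert_of_mem hyS
        · have : y = z := by
            rcases eq_or_lt_of_le hyz with h | h
            · exact h
            · exact absurd h (hxmin y (Finset.mem_sdiff.mpr ⟨hy, hyS⟩))
          rw [this]
          exact Finset.mem_insert_self z S
      · exact Finset.mem_insert_of_mem (hSdc z hzS y hy hyz)

/-- Downward-closed subsets of a finite chain of equal size are equal. -/
lemma chain_downset_unique (K : Finset P) (hK : ∀ x ∈ K, ∀ y ∈ K, x ≤ y ∨ y ≤ x)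
    (S1 S2 : Finset P) (h1 : S1 ⊆ K) (h2 : S2 ⊆ K)
    (hd1 : ∀ x ∈ S1, ∀ y ∈ K, y ≤ x → y ∈ S1)
    (hd2 : ∀ x ∈ S2, ∀ y ∈ K, y ≤ x → y ∈ S2)
    (hcard : S1.card = S2.card) : S1 = S2 := by
  have htot : S1 ⊆ S2 ∨ S2 ⊆ S1 := by
    by_cases hs : S1 ⊆ S2
    · exact Or.inl hs
    · obtain ⟨x, hx1, hx2⟩ := Finset.not_subset.mp hs
      refine Or.inr fun z hz2 => ?_
      rcases hK z (h2 hz2) x (h1 hx1) with h | h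
      · exact hd1 x hx1 z (h2 hz2) h
      · exact absurd (hd2 z hz2 x (h1 hx1) h) hx2
  rcases htot with h | h
  · exact Finset.eq_of_subset_of_card_le h (le_of_eq hcard.symm)
  · exact (Finset.eq_of_subset_of_card_le h (le_of_eq hcard)).symm

lemma Kc_chain (hG : G.IsTwoColorGridPoset) (hM : G.MStructured !![2, 0; 0, 2])
    (hmax : G.MaxProperty) (γ : Fin 2) :
    ∀ x ∈ Finset.univ.filter (fun x => G.color x = γ),
      ∀ y ∈ Finset.univ.filter (fun x => G.color x = γ), x ≤ y ∨ y ≤ x := by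
  intro x hx y hy
  simp only [Finset.mem_filter, Finset.mem_univ, true_and] at hx hy
  exact comparable_of_color_eq hG hM hmax (hx.trans hy.symm)

lemma sum_ideals {R : Type*} [AddCommMonoid R]
    (hG : G.IsTwoColorGridPoset) (hM : G.MStructured !![2, 0; 0, 2])
    (hmax : G.MaxProperty) (f : ℕ → ℕ → R) :
    ∑ t ∈ Finset.univ.filter (fun t : Finset P => IsIdeal t),
        f (t.filter (fun x => G.color x = 0)).card (t.filter (fun x => G.color x = 1)).card
      = ∑ p ∈ Finset.range ((Finset.univ.filter (fun x => G.color x = 0)).card + 1)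
          ×ˢ Finset.range ((Finset.univ.filter (fun x => G.color x = 1)).card + 1),
          f p.1 p.2 := by
  classical
  have hfilter_sub : ∀ (t : Finset P) (γ : Fin 2),
      t.filter (fun x => G.color x = γ) ⊆ Finset.univ.filter (fun x => G.color x = γ) :=
    fun t γ => Finset.filter_subset_filter _ (Finset.subset_univ t)
  have hdc : ∀ (t : Finset P), IsIdeal t → ∀ (γ : Fin 2),
      ∀ x ∈ t.filter (fun x => G.color x = γ),
        ∀ y ∈ Finset.univ.filter (fun x => G.color x = γ),
          y ≤ x → y ∈ t.filter (fun x => G.color x = γ) := by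
    intro t ht γ x hx y hy hyx
    simp only [Finset.mem_filter, Finset.mem_univ, true_and] at hx hy ⊢
    exact ⟨ht hx.1 hyx, hy⟩
  have hsplit : ∀ (t : Finset P),
      t = t.filter (fun x => G.color x = 0) ∪ t.filter (fun x => G.color x = 1) := by
    intro t
    ext x
    simp only [Finset.mem_union, Finset.mem_filter]
    rcases fin2_cases_or (G.color x) with h | h <;> tauto
  refine Finset.sum_bij
    (fun t _ => ((t.filter (fun x => G.color x = 0)).card,
      (t.filter (fun x => G.color x = 1)).card)) ?_ ?_ ?_ ?_
  · intro t ht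
    simp only [Finset.mem_product, Finset.mem_range]
    exact ⟨Nat.lt_succ_of_le (Finset.card_le_card (hfilter_sub t 0)),
      Nat.lt_succ_of_le (Finset.card_le_card (hfilter_sub t 1))⟩
  · intro t1 ht1 t2 ht2 heq
    simp only [Finset.mem_filter, Finset.mem_univ, true_and] at ht1 ht2
    simp only [Prod.mk.injEq] at heq
    have e0 := chain_downset_unique _ (Kc_chain hG hM hmax 0) _ _
      (hfilter_sub t1 0) (hfilter_sub t2 0) (hdc t1 ht1 0) (hdc t2 ht2 0) heq.1
    have e1 := chain_downset_unique _ (Kc_chain hG hM hmax 1) _ _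
      (hfilter_sub t1 1) (hfilter_sub t2 1) (hdc t1 ht1 1) (hdc t2 ht2 1) heq.2
    rw [hsplit t1, hsplit t2, e0, e1]
  · rintro ⟨j, k⟩ hp
    simp only [Finset.mem_product, Finset.mem_range] at hp
    obtain ⟨S0, hS0K, hS0card, hS0dc⟩ := chain_downset_exists _ (Kc_chain hG hM hmax 0)
      j (by omega)
    obtain ⟨S1, hS1K, hS1card, hS1dc⟩ := chain_downset_exists _ (Kc_chain hG hM hmax 1)
      k (by omega)
    have hcol0 : ∀ x ∈ S0, G.color x = 0 := by
      intro x hx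
      have := hS0K hx
      simp only [Finset.mem_filter] at this
      exact this.2
    have hcol1 : ∀ x ∈ S1, G.color x = 1 := by
      intro x hx
      have := hS1K hx
      simp only [Finset.mem_filter] at this
      exact this.2
    have hfilt0 : (S0 ∪ S1).filter (fun x => G.color x = 0) = S0 := by
      ext x
      simp only [Finset.mem_filter, Finset.mem_union]
      constructor
      · rintro ⟨hx | hx, hc⟩
        · exact hx
        · exact absurd (hcol1 x hx) (by rw [hc]; decide)
      · intro hx; exact ⟨Or.inl hx, hcol0 x hx⟩
    have hfilt1 : (S0 ∪ S1).filter (fun x => G.color x = 1) = S1 := by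
      ext x
      simp only [Finset.mem_filter, Finset.mem_union]
      constructor
      · rintro ⟨hx | hx, hc⟩
        · exact absurd (hcol0 x hx) (by rw [hc]; decide)
        · exact hx
      · intro hx; exact ⟨Or.inr hx, hcol1 x hx⟩
    have hideal : IsIdeal (S0 ∪ S1) := by
      intro x hx y hy
      rcases Finset.mem_union.mp hx with hx0 | hx1
      · have hyc : G.color y = 0 := (color_eq_of_le hG hM hy).trans (hcol0 x hx0)
        exact Finset.mem_union_left _ (hS0dc x hx0 y (by simp [hyc]) hy)
      · have hyc : G.color y = 1 := (color_eq_of_le hG hM hy).trans (hcol1 x hx1)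
        exact Finset.mem_union_right _ (hS1dc x hx1 y (by simp [hyc]) hy)
    exact ⟨S0 ∪ S1, by simp [hideal], by rw [hfilt0, hfilt1, hS0card, hS1card]⟩
  · intro t ht
    rfl

end Counting

end GridData

/-- The set of units of the ring of 2×2 integer matrices whose underlying matrices
are the two given generators. -/
def genSet (A B : Matrix (Fin 2) (Fin 2) ℤ) : Set ((Matrix (Fin 2) (Fin 2) ℤ)ˣ) :=
  {w | (w : Matrix (Fin 2) (Fin 2) ℤ) = A ∨ (w : Matrix (Fin 2) (Fin 2) ℤ) = B}

namespace Stmt0Aux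

abbrev R2 := Matrix (Fin 2) (Fin 2) ℤ

def mA : R2 := !![-1, 0; 0, 1]
def mB : R2 := !![1, 0; 0, -1]
def mC : R2 := !![-1, 0; 0, -1]

lemma mm_AA : mA * mA = 1 := by
  ext i j
  fin_cases i <;> fin_cases j <;>
    simp [mA, Matrix.mul_apply, Fin.sum_univ_two, Matrix.one_apply]

lemma mm_BB : mB * mB = 1 := by
  ext i j
  fin_cases i <;> fin_cases j <;>
    simp [mB, Matrix.mul_apply, Fin.sum_univ_two, Matrix.one_apply]

lemma mm_CC : mC * mC = 1 := by
  ext i j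
  fin_cases i <;> fin_cases j <;>
    simp [mC, Matrix.mul_apply, Fin.sum_univ_two, Matrix.one_apply]

lemma mm_AB : mA * mB = mC := by
  ext i j
  fin_cases i <;> fin_cases j <;>
    simp [mA, mB, mC, Matrix.mul_apply, Fin.sum_univ_two]

lemma mm_BA : mB * mA = mC := by
  ext i j
  fin_cases i <;> fin_cases j <;>
    simp [mA, mB, mC, Matrix.mul_apply, Fin.sum_univ_two]

lemma mm_AC : mA * mC = mB := by
  ext i j
  fin_cases i <;> fin_cases j <;>
    simp [mA, mB, mC, Matrix.mul_apply, Fin.sum_univ_two]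

lemma mm_CA : mC * mA = mB := by
  ext i j
  fin_cases i <;> fin_cases j <;>
    simp [mA, mB, mC, Matrix.mul_apply, Fin.sum_univ_two]

lemma mm_BC : mB * mC = mA := by
  ext i j
  fin_cases i <;> fin_cases j <;>
    simp [mA, mB, mC, Matrix.mul_apply, Fin.sum_univ_two]

lemma mm_CB : mC * mB = mA := by
  ext i j
  fin_cases i <;> fin_cases j <;>
    simp [mA, mB, mC, Matrix.mul_apply, Fin.sum_univ_two]

def uA : R2ˣ := ⟨mA, mA, mm_AA, mm_AA⟩
def uB : R2ˣ := ⟨mB, mB, mm_BB, mm_BB⟩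
def uC : R2ˣ := ⟨mC, mC, mm_CC, mm_CC⟩

lemma u_AA : uA * uA = 1 := Units.ext mm_AA
lemma u_BB : uB * uB = 1 := Units.ext mm_BB
lemma u_CC : uC * uC = 1 := Units.ext mm_CC
lemma u_AB : uA * uB = uC := Units.ext mm_AB
lemma u_BA : uB * uA = uC := Units.ext mm_BA
lemma u_AC : uA * uC = uB := Units.ext mm_AC
lemma u_CA : uC * uA = uB := Units.ext mm_CA
lemma u_BC : uB * uC = uA := Units.ext mm_BC
lemma u_CB : uC * uB = uA := Units.ext mm_CB
lemma u_Ainv : uA⁻¹ = uA := Units.ext rfl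
lemma u_Binv : uB⁻¹ = uB := Units.ext rfl
lemma u_Cinv : uC⁻¹ = uC := Units.ext rfl

lemma entry_ne {M N : R2} (i j : Fin 2) (h : M i j ≠ N i j) : M ≠ N :=
  fun he => h (he ▸ rfl)

lemma ne_1A : (1 : R2ˣ) ≠ uA := by
  intro h
  have hval : (1 : R2) = mA := congrArg Units.val h
  have := congrFun (congrFun hval 0) 0
  simp [mA, Matrix.one_apply] at this

lemma ne_1B : (1 : R2ˣ) ≠ uB := by
  intro h
  have hval : (1 : R2) = mB := congrArg Units.val h
  have := congrFun (congrFun hval 1) 1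
  simp [mB, Matrix.one_apply] at this

lemma ne_1C : (1 : R2ˣ) ≠ uC := by
  intro h
  have hval : (1 : R2) = mC := congrArg Units.val h
  have := congrFun (congrFun hval 0) 0
  simp [mC, Matrix.one_apply] at this

lemma ne_AB : uA ≠ uB := by
  intro h
  have hval : mA = mB := congrArg Units.val h
  have := congrFun (congrFun hval 0) 0
  simp [mA, mB] at this

lemma ne_AC : uA ≠ uC := by
  intro h
  have hval : mA = mC := congrArg Units.val h
  have := congrFun (congrFun hval 1) 1
  simp [mA, mC] at this

lemma ne_BC : uB ≠ uC := by
  intro h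
  have hval : mB = mC := congrArg Units.val h
  have := congrFun (congrFun hval 0) 0
  simp [mB, mC] at this

def Wgrp : Subgroup R2ˣ where
  carrier := {1, uA, uB, uC}
  one_mem' := Or.inl rfl
  inv_mem' := by
    intro x hx
    rcases hx with rfl | rfl | rfl | rfl
    · exact Or.inl inv_one
    · exact Or.inr (Or.inl u_Ainv)
    · exact Or.inr (Or.inr (Or.inl u_Binv))
    · exact Or.inr (Or.inr (Or.inr u_Cinv))
  mul_mem' := by
    intro x y hx hy
    rcases hx with rfl | rfl | rfl | rfl <;> rcases hy with rfl | rfl | rfl | rfl <;>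
      simp only [one_mul, mul_one, u_AA, u_BB, u_CC, u_AB, u_BA, u_AC, u_CA, u_BC, u_CB] <;>
      first
        | exact Or.inl rfl
        | exact Or.inr (Or.inl rfl)
        | exact Or.inr (Or.inr (Or.inl rfl))
        | exact Or.inr (Or.inr (Or.inr rfl))

lemma closure_eq : Subgroup.closure (genSet mA mB) = Wgrp := by
  apply le_antisymm
  · rw [Subgroup.closure_le]
    rintro w (hw | hw)
    · have hwa : w = uA := Units.ext hw
      rw [hwa]
      exact (Or.inr (Or.inl rfl) : uA ∈ ({1, uA, uB, uC} : Set R2ˣ))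
    · have hwb : w = uB := Units.ext hw
      rw [hwb]
      exact (Or.inr (Or.inr (Or.inl rfl)) : uB ∈ ({1, uA, uB, uC} : Set R2ˣ))
  · intro x hx
    have hA : uA ∈ Subgroup.closure (genSet mA mB) :=
      Subgroup.subset_closure (Or.inl rfl)
    have hB : uB ∈ Subgroup.closure (genSet mA mB) :=
      Subgroup.subset_closure (Or.inr rfl)
    rcases hx with rfl | rfl | rfl | rfl
    · exact one_mem _
    · exact hA
    · exact hB
    · exact u_AB ▸ mul_mem hA hB

lemma coe_Wgrp : ((Wgrp : Subgroup R2ˣ) : Set R2ˣ)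
    = (({1, uA, uB, uC} : Finset R2ˣ) : Set R2ˣ) := by
  classical
  ext w
  simp only [Finset.coe_insert, Finset.coe_singleton]
  rfl

lemma finsum_W {α : Type*} [AddCommMonoid α] (f : R2ˣ → α) :
    (∑ᶠ w ∈ ((Subgroup.closure (genSet mA mB) : Subgroup R2ˣ) : Set R2ˣ), f w)
      = f 1 + f uA + f uB + f uC := by
  classical
  rw [closure_eq, coe_Wgrp, finsum_mem_coe_finset]
  rw [Finset.sum_insert (by simp [ne_1A, ne_1B, ne_1C]),
    Finset.sum_insert (by simp [ne_AB, ne_AC]),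
    Finset.sum_insert (by simp [ne_BC]), Finset.sum_singleton]
  abel

lemma mv_one (v : Fin 2 → ℤ) : (1 : R2).mulVec v = v := Matrix.one_mulVec v

lemma mv_A (x y : ℤ) : mA.mulVec ![x, y] = ![-x, y] := by
  funext i
  fin_cases i <;>
    simp [mA, Matrix.mulVec, dotProduct, Fin.sum_univ_two]

lemma mv_B (x y : ℤ) : mB.mulVec ![x, y] = ![x, -y] := by
  funext i
  fin_cases i <;>
    simp [mB, Matrix.mulVec, dotProduct, Fin.sum_univ_two]

lemma mv_C (x y : ℤ) : mC.mulVec ![x, y] = ![-x, -y] := by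
  funext i
  fin_cases i <;>
    simp [mC, Matrix.mulVec, dotProduct, Fin.sum_univ_two]

lemma det_A : mA.det = -1 := by
  show Matrix.det !![-1, 0; 0, 1] = -1
  rw [Matrix.det_fin_two_of]; norm_num

lemma det_B : mB.det = -1 := by
  show Matrix.det !![1, 0; 0, -1] = -1
  rw [Matrix.det_fin_two_of]; norm_num

lemma det_C : mC.det = 1 := by
  show Matrix.det !![-1, 0; 0, -1] = 1
  rw [Matrix.det_fin_two_of]; norm_num

end Stmt0Aux

namespace Stmt0Aux

lemma val_one' : ((1 : R2ˣ) : R2) = 1 := rfl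
lemma val_uA : ((uA : R2ˣ) : R2) = mA := rfl
lemma val_uB : ((uB : R2ˣ) : R2) = mB := rfl
lemma val_uC : ((uC : R2ˣ) : R2) = mC := rfl

abbrev F := AddMonoidAlgebra ℤ (Fin 2 → ℤ)

lemma vadd (x y x' y' : ℤ) : (![x, y] + ![x', y'] : Fin 2 → ℤ) = ![x + x', y + y'] := by
  funext i
  fin_cases i <;> simp

lemma vec_congr {x y x' y' : ℤ} (hx : x = x') (hy : y = y') :
    (![x, y] : Fin 2 → ℤ) = ![x', y'] := by rw [hx, hy]

lemma tel0 (n : ℕ) :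
    ((∑ j ∈ Finset.range (n + 1),
        AddMonoidAlgebra.single (![2 * (j : ℤ) - (n : ℤ), 0] : Fin 2 → ℤ) (1 : ℤ)) *
      (AddMonoidAlgebra.single (![1, 0] : Fin 2 → ℤ) (1 : ℤ)
        - AddMonoidAlgebra.single (![-1, 0] : Fin 2 → ℤ) (1 : ℤ)))
    = AddMonoidAlgebra.single (![(n : ℤ) + 1, 0] : Fin 2 → ℤ) (1 : ℤ)
      - AddMonoidAlgebra.single (![-(n : ℤ) - 1, 0] : Fin 2 → ℤ) (1 : ℤ) := by
  set f : ℕ → F := fun i => AddMonoidAlgebra.single (![2 * (i : ℤ) - (n : ℤ) - 1, 0]) (1 : ℤ)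
    with hf
  have key : ∀ j ∈ Finset.range (n + 1),
      AddMonoidAlgebra.single (![2 * (j : ℤ) - (n : ℤ), 0] : Fin 2 → ℤ) (1 : ℤ) *
        (AddMonoidAlgebra.single (![1, 0] : Fin 2 → ℤ) (1 : ℤ)
          - AddMonoidAlgebra.single (![-1, 0] : Fin 2 → ℤ) (1 : ℤ))
      = f (j + 1) - f j := by
    intro j _
    rw [hf]
    simp only
    rw [mul_sub, AddMonoidAlgebra.single_mul_single, AddMonoidAlgebra.single_mul_single,
      mul_one, vadd, vadd]
    have e1 : (2 * (j : ℤ) - n + 1) = 2 * ((j : ℕ) + 1 : ℕ) - n - 1 := by push_cast; ring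
    have e2 : (2 * (j : ℤ) - n + -1) = 2 * (j : ℤ) - n - 1 := by ring
    rw [vec_congr e1 (by ring : (0 : ℤ) + 0 = 0), vec_congr e2 (by ring : (0 : ℤ) + 0 = 0)]
  rw [Finset.sum_mul, Finset.sum_congr rfl key, Finset.sum_range_sub f (n + 1), hf]
  simp only
  rw [vec_congr (by push_cast; ring : (2 * ((n : ℕ) + 1 : ℕ) - n - 1 : ℤ) = (n : ℤ) + 1) rfl,
    vec_congr (by push_cast; ring : (2 * ((0 : ℕ) : ℤ) - n - 1) = -(n : ℤ) - 1) rfl]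

lemma tel1 (n : ℕ) :
    ((∑ j ∈ Finset.range (n + 1),
        AddMonoidAlgebra.single (![0, 2 * (j : ℤ) - (n : ℤ)] : Fin 2 → ℤ) (1 : ℤ)) *
      (AddMonoidAlgebra.single (![0, 1] : Fin 2 → ℤ) (1 : ℤ)
        - AddMonoidAlgebra.single (![0, -1] : Fin 2 → ℤ) (1 : ℤ)))
    = AddMonoidAlgebra.single (![0, (n : ℤ) + 1] : Fin 2 → ℤ) (1 : ℤ)
      - AddMonoidAlgebra.single (![0, -(n : ℤ) - 1] : Fin 2 → ℤ) (1 : ℤ) := by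
  set f : ℕ → F := fun i => AddMonoidAlgebra.single (![0, 2 * (i : ℤ) - (n : ℤ) - 1]) (1 : ℤ)
    with hf
  have key : ∀ j ∈ Finset.range (n + 1),
      AddMonoidAlgebra.single (![0, 2 * (j : ℤ) - (n : ℤ)] : Fin 2 → ℤ) (1 : ℤ) *
        (AddMonoidAlgebra.single (![0, 1] : Fin 2 → ℤ) (1 : ℤ)
          - AddMonoidAlgebra.single (![0, -1] : Fin 2 → ℤ) (1 : ℤ))
      = f (j + 1) - f j := by
    intro j _
    rw [hf]
    simp only
    rw [mul_sub, AddMonoidAlgebra.single_mul_single, AddMonoidAlgebra.single_mul_single,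
      mul_one, vadd, vadd]
    have e1 : (2 * (j : ℤ) - n + 1) = 2 * ((j : ℕ) + 1 : ℕ) - n - 1 := by push_cast; ring
    have e2 : (2 * (j : ℤ) - n + -1) = 2 * (j : ℤ) - n - 1 := by ring
    rw [vec_congr (by ring : (0 : ℤ) + 0 = 0) e1, vec_congr (by ring : (0 : ℤ) + 0 = 0) e2]
  rw [Finset.sum_mul, Finset.sum_congr rfl key, Finset.sum_range_sub f (n + 1), hf]
  simp only
  rw [vec_congr rfl (by push_cast; ring : (2 * ((n : ℕ) + 1 : ℕ) - n - 1 : ℤ) = (n : ℤ) + 1),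
    vec_congr rfl (by push_cast; ring : (2 * ((0 : ℕ) : ℤ) - n - 1) = -(n : ℤ) - 1)]

end Stmt0Aux

namespace Stmt0Aux

lemma single_negone (v : Fin 2 → ℤ) :
    (AddMonoidAlgebra.single v (-1 : ℤ) : F) = -AddMonoidAlgebra.single v 1 :=
  AddMonoidAlgebra.single_neg v 1

lemma sub_mul_expand (x x' y y' : ℤ) :
    ((AddMonoidAlgebra.single (![x, 0] : Fin 2 → ℤ) (1 : ℤ) : F)
        - AddMonoidAlgebra.single (![x', 0] : Fin 2 → ℤ) (1 : ℤ)) *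
      (AddMonoidAlgebra.single (![0, y] : Fin 2 → ℤ) (1 : ℤ)
        - AddMonoidAlgebra.single (![0, y'] : Fin 2 → ℤ) (1 : ℤ))
    = AddMonoidAlgebra.single (![x, y] : Fin 2 → ℤ) (1 : ℤ)
      - AddMonoidAlgebra.single (![x', y] : Fin 2 → ℤ) (1 : ℤ)
      - AddMonoidAlgebra.single (![x, y'] : Fin 2 → ℤ) (1 : ℤ)
      + AddMonoidAlgebra.single (![x', y'] : Fin 2 → ℤ) (1 : ℤ) := by
  rw [sub_mul, mul_sub, mul_sub, AddMonoidAlgebra.single_mul_single,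
    AddMonoidAlgebra.single_mul_single, AddMonoidAlgebra.single_mul_single,
    AddMonoidAlgebra.single_mul_single, mul_one, vadd, vadd, vadd, vadd,
    vec_congr (by ring : x + 0 = x) (by ring : (0 : ℤ) + y = y),
    vec_congr (by ring : x' + 0 = x') (by ring : (0 : ℤ) + y = y),
    vec_congr (by ring : x + 0 = x) (by ring : (0 : ℤ) + y' = y'),
    vec_congr (by ring : x' + 0 = x') (by ring : (0 : ℤ) + y' = y')]
  ring

end Stmt0Aux

theorem stmt_0 {P : Type} [PartialOrder P] [Fintype P] (G : GridData P)
    (hG : G.IsTwoColorGridPoset) (hmax : G.MaxProperty)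
    (hM : G.MStructured !![2, 0; 0, 2])
    (a b : ℤ) (ha : a = G.wt Finset.univ 0) (hb : b = G.wt Finset.univ 1)
    (W : Subgroup ((Matrix (Fin 2) (Fin 2) ℤ)ˣ))
    (hW : W = Subgroup.closure (genSet !![-1, 0; 0, 1] !![1, 0; 0, -1])) :
    (∑ t ∈ Finset.univ.filter (fun t : Finset P => IsIdeal t),
        AddMonoidAlgebra.single (G.wt t) (1 : ℤ)) *
      (∑ᶠ w ∈ (W : Set ((Matrix (Fin 2) (Fin 2) ℤ)ˣ)), AddMonoidAlgebra.single
          ((w : Matrix (Fin 2) (Fin 2) ℤ).mulVec ![1, 1])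
          ((w : Matrix (Fin 2) (Fin 2) ℤ).det)) =
    ∑ᶠ w ∈ (W : Set ((Matrix (Fin 2) (Fin 2) ℤ)ˣ)), AddMonoidAlgebra.single
        ((w : Matrix (Fin 2) (Fin 2) ℤ).mulVec ![a + 1, b + 1])
        ((w : Matrix (Fin 2) (Fin 2) ℤ).det) := by
  classical
  obtain ⟨hGposet, hGcolor⟩ := id hG
  -- abbreviations for the two color class sizes
  set A : ℕ := (Finset.univ.filter (fun x => G.color x = 0)).card with hA
  set B : ℕ := (Finset.univ.filter (fun x => G.color x = 1)).card with hB
  have hUideal : IsIdeal (Finset.univ : Finset P) := fun x _ y _ => Finset.mem_univ y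
  have haA : a = (A : ℤ) := by
    rw [ha, GridData.wt_apply, GridData.mcoord_simple hG hM 0 hUideal, ← hA]
    ring
  have hbB : b = (B : ℤ) := by
    rw [hb, GridData.wt_apply, GridData.mcoord_simple hG hM 1 hUideal, ← hB]
    ring
  -- Step 1: the character sum factors
  have h1 : ∀ t ∈ Finset.univ.filter (fun t : Finset P => IsIdeal t),
      AddMonoidAlgebra.single (G.wt t) (1 : ℤ)
      = (fun (j k : ℕ) => AddMonoidAlgebra.single
          (![2 * (j : ℤ) - (A : ℤ), 2 * (k : ℤ) - (B : ℤ)] : Fin 2 → ℤ) (1 : ℤ))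
          (t.filter (fun x => G.color x = 0)).card
          (t.filter (fun x => G.color x = 1)).card := by
    intro t ht
    have hti : IsIdeal t := (Finset.mem_filter.mp ht).2
    rw [GridData.wt_simple hG hM hti]
  have h2 := GridData.sum_ideals (G := G) hG hM hmax
    (fun j k => AddMonoidAlgebra.single
      (![2 * (j : ℤ) - (A : ℤ), 2 * (k : ℤ) - (B : ℤ)] : Fin 2 → ℤ) (1 : ℤ))
  rw [← hA, ← hB] at h2
  have step1 : (∑ t ∈ Finset.univ.filter (fun t : Finset P => IsIdeal t),
      AddMonoidAlgebra.single (G.wt t) (1 : ℤ))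
      = ∑ p ∈ Finset.range (A + 1) ×ˢ Finset.range (B + 1),
          AddMonoidAlgebra.single
            (![2 * (p.1 : ℤ) - (A : ℤ), 2 * (p.2 : ℤ) - (B : ℤ)] : Fin 2 → ℤ) (1 : ℤ) :=
    (Finset.sum_congr rfl h1).trans h2
  have key1 : (∑ t ∈ Finset.univ.filter (fun t : Finset P => IsIdeal t),
      AddMonoidAlgebra.single (G.wt t) (1 : ℤ))
      = (∑ j ∈ Finset.range (A + 1),
          AddMonoidAlgebra.single (![2 * (j : ℤ) - (A : ℤ), 0] : Fin 2 → ℤ) (1 : ℤ))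
        * (∑ k ∈ Finset.range (B + 1),
          AddMonoidAlgebra.single (![0, 2 * (k : ℤ) - (B : ℤ)] : Fin 2 → ℤ) (1 : ℤ)) := by
    rw [step1, Finset.sum_mul_sum, Finset.sum_product]
    refine Finset.sum_congr rfl fun j _ => Finset.sum_congr rfl fun k _ => ?_
    rw [AddMonoidAlgebra.single_mul_single, mul_one, Stmt0Aux.vadd,
      Stmt0Aux.vec_congr (by ring : 2 * (j : ℤ) - A + 0 = 2 * (j : ℤ) - A)
        (by ring : (0 : ℤ) + (2 * (k : ℤ) - B) = 2 * (k : ℤ) - B)]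
  -- Step 2: rewrite the two finsums over W
  have hgen : genSet !![-1, 0; 0, 1] !![1, 0; 0, -1] = genSet Stmt0Aux.mA Stmt0Aux.mB := rfl
  rw [hW, hgen, Stmt0Aux.finsum_W, Stmt0Aux.finsum_W]
  rw [Units.val_one, Stmt0Aux.val_uA, Stmt0Aux.val_uB, Stmt0Aux.val_uC]
  rw [Matrix.one_mulVec, Matrix.one_mulVec, Stmt0Aux.mv_A, Stmt0Aux.mv_B, Stmt0Aux.mv_C,
    Stmt0Aux.mv_A, Stmt0Aux.mv_B, Stmt0Aux.mv_C, Matrix.det_one,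
    Stmt0Aux.det_A, Stmt0Aux.det_B, Stmt0Aux.det_C]
  rw [key1]
  rw [haA, hbB]
  -- normalize negated vector entries
  rw [show (![(-1 : ℤ), 1] : Fin 2 → ℤ) = ![-1, 1] from rfl]
  rw [show (![-((A : ℤ) + 1), (B : ℤ) + 1] : Fin 2 → ℤ) = ![-(A : ℤ) - 1, (B : ℤ) + 1] from
      Stmt0Aux.vec_congr (by ring) rfl,
    show (![(A : ℤ) + 1, -((B : ℤ) + 1)] : Fin 2 → ℤ) = ![(A : ℤ) + 1, -(B : ℤ) - 1] from
      Stmt0Aux.vec_congr rfl (by ring),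
    show (![-((A : ℤ) + 1), -((B : ℤ) + 1)] : Fin 2 → ℤ) = ![-(A : ℤ) - 1, -(B : ℤ) - 1] from
      Stmt0Aux.vec_congr (by ring) (by ring)]
  rw [Stmt0Aux.single_negone, Stmt0Aux.single_negone, Stmt0Aux.single_negone,
    Stmt0Aux.single_negone]
  -- turn the denominator into a product
  have hden : (AddMonoidAlgebra.single (![1, 1] : Fin 2 → ℤ) (1 : ℤ) : Stmt0Aux.F)
      + -AddMonoidAlgebra.single (![-1, 1] : Fin 2 → ℤ) (1 : ℤ)
      + -AddMonoidAlgebra.single (![1, -1] : Fin 2 → ℤ) (1 : ℤ)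
      + AddMonoidAlgebra.single (![-1, -1] : Fin 2 → ℤ) (1 : ℤ)
      = (AddMonoidAlgebra.single (![1, 0] : Fin 2 → ℤ) (1 : ℤ)
          - AddMonoidAlgebra.single (![-1, 0] : Fin 2 → ℤ) (1 : ℤ))
        * (AddMonoidAlgebra.single (![0, 1] : Fin 2 → ℤ) (1 : ℤ)
          - AddMonoidAlgebra.single (![0, -1] : Fin 2 → ℤ) (1 : ℤ)) := by
    rw [Stmt0Aux.sub_mul_expand 1 (-1) 1 (-1)]
    ring
  rw [hden, mul_mul_mul_comm, Stmt0Aux.tel0 A, Stmt0Aux.tel1 B,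
    Stmt0Aux.sub_mul_expand ((A : ℤ) + 1) (-(A : ℤ) - 1) ((B : ℤ) + 1) (-(B : ℤ) - 1)]
  ring
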